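/- arXiv:2104.13481 — 2 statements merged into one kernel-verified Lean document; each statement's English description precedes it below -/
import Mathlib

section
/- With ξ defined from a strongly normalized 3-cocycle c, for every idempotent e ∈ E(T) and word w ∈ F(T ⊔ T⁻¹), one has ξ_e(w) = θ(e · r(φ(w))), and for every t ∈ T, θ(e)·ξ_t(w) = ξ_{et}(w). -/
/-- An inverse semigroup: every element `s` has a (unique) inverse `s⁻¹`
with `s * s⁻¹ * s = s` and `s⁻¹ * s * s⁻¹ = s⁻¹`. -/
class InverseSemigroup (S : Type*) extends Semigroup S, Inv S where
  mul_inv_mul : ∀ s : S, s * s⁻¹ * s = s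
  inv_mul_inv : ∀ s : S, s⁻¹ * s * s⁻¹ = s⁻¹
  inv_unique : ∀ s t : S, s * t * s = s → t * s * t = t → t = s⁻¹

namespace InverseSemigroup

/-- The set of idempotents of a multiplicative structure. -/
def E (S : Type*) [Mul S] : Set S := {e | e * e = e}

/-- The natural partial order: `s ≤ t` iff `s = s * s⁻¹ * t`. -/
def nle {S : Type*} [Mul S] [Inv S] (s t : S) : Prop := s = s * s⁻¹ * t

/-- `r s = s * s⁻¹`. -/
def r {S : Type*} [Mul S] [Inv S] (s : S) : S := s * s⁻¹

/-- A Clifford semigroup (semilattice of groups): idempotents are central. -/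
def IsClifford (S : Type*) [Mul S] : Prop := ∀ e ∈ E S, ∀ s : S, e * s = s * e

end InverseSemigroup

open InverseSemigroup

/-- The value in `T` of the letter `(x, true) = [x]` or `(x, false) = [x]⁻¹`. -/
def letterVal {T : Type*} [InverseSemigroup T] (p : T × Bool) : T :=
  if p.2 then p.1 else p.1⁻¹

/-- The evaluation `φ` in `T` of a nonempty word `p :: l` over `T ⊔ T⁻¹`. -/
def wordVal {T : Type*} [InverseSemigroup T] (p : T × Bool) (l : List (T × Bool)) : T :=
  l.foldl (fun acc q => acc * letterVal q) (letterVal p)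

namespace InverseSemigroup

variable {S : Type*} [InverseSemigroup S]

lemma mem_E {e : S} : e ∈ E S ↔ e * e = e := Iff.rfl

lemma inv_inv' (s : S) : s⁻¹⁻¹ = s :=
  (inv_unique s⁻¹ s (inv_mul_inv s) (mul_inv_mul s)).symm

lemma mim (s x : S) : s * (s⁻¹ * (s * x)) = s * x := by
  calc s * (s⁻¹ * (s * x)) = (s * s⁻¹ * s) * x := by simp only [mul_assoc]
    _ = s * x := by rw [mul_inv_mul]

lemma imi (s x : S) : s⁻¹ * (s * (s⁻¹ * x)) = s⁻¹ * x := by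
  calc s⁻¹ * (s * (s⁻¹ * x)) = (s⁻¹ * s * s⁻¹) * x := by simp only [mul_assoc]
    _ = s⁻¹ * x := by rw [inv_mul_inv]

lemma idem_inv {e : S} (he : e ∈ E S) : e⁻¹ = e :=
  (inv_unique e e (by rw [mem_E.mp he, mem_E.mp he]) (by rw [mem_E.mp he, mem_E.mp he])).symm

lemma idem_mul_idem {e f : S} (he : e ∈ E S) (hf : f ∈ E S) : e * f ∈ E S := by
  have he' := mem_E.mp he
  have hf' := mem_E.mp hf
  set a := (e * f)⁻¹ with ha
  have h1 : e * f * a * (e * f) = e * f := mul_inv_mul (e * f)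
  have h2 : a * (e * f) * a = a := inv_mul_inv (e * f)
  have hg1 : (e * f) * (f * a * e) * (e * f) = e * f := by
    calc (e * f) * (f * a * e) * (e * f) = e * (f * f) * a * (e * e) * f := by
          simp only [mul_assoc]
      _ = e * f * a * (e * f) := by rw [hf', he']; simp only [mul_assoc]
      _ = e * f := h1
  have h2' : a * (e * (f * a)) = a := by
    calc a * (e * (f * a)) = a * (e * f) * a := by simp only [mul_assoc]
      _ = a := h2
  have hg2 : (f * a * e) * (e * f) * (f * a * e) = f * a * e := by
    calc (f * a * e) * (e * f) * (f * a * e)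
        = f * (a * ((e * e) * ((f * f) * (a * e)))) := by simp only [mul_assoc]
      _ = f * (a * (e * (f * (a * e)))) := by rw [he', hf']
      _ = f * ((a * (e * (f * a))) * e) := by simp only [mul_assoc]
      _ = f * (a * e) := by rw [h2']
      _ = f * a * e := by rw [mul_assoc]
  have hga : f * a * e = a := inv_unique (e * f) (f * a * e) hg1 hg2
  have hgg : (f * a * e) * (f * a * e) = f * a * e := by
    calc (f * a * e) * (f * a * e) = f * ((a * (e * (f * a))) * e) := by simp only [mul_assoc]
      _ = f * (a * e) := by rw [h2']
      _ = f * a * e := by rw [mul_assoc]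
  have hgidem : a * a = a := by rw [← hga]; exact hgg
  have : e * f = a := by rw [← idem_inv hgidem, ha, inv_inv']
  rw [mem_E, this]; exact hgidem

lemma idem_comm {e f : S} (he : e ∈ E S) (hf : f ∈ E S) : e * f = f * e := by
  have hef := idem_mul_idem he hf
  have hfe := idem_mul_idem hf he
  have h1 : (e * f) * (f * e) * (e * f) = e * f := by
    calc (e * f) * (f * e) * (e * f) = e * ((f * f) * ((e * e) * f)) := by simp only [mul_assoc]
      _ = e * (f * (e * f)) := by rw [mem_E.mp hf, mem_E.mp he]
      _ = (e * f) * (e * f) := by simp only [mul_assoc]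
      _ = e * f := mem_E.mp hef
  have h2 : (f * e) * (e * f) * (f * e) = f * e := by
    calc (f * e) * (e * f) * (f * e) = f * ((e * e) * ((f * f) * e)) := by simp only [mul_assoc]
      _ = f * (e * (f * e)) := by rw [mem_E.mp he, mem_E.mp hf]
      _ = (f * e) * (f * e) := by simp only [mul_assoc]
      _ = f * e := mem_E.mp hfe
  have := inv_unique (e * f) (f * e) h1 h2
  rw [this, idem_inv hef]

lemma rr (s : S) : s * s⁻¹ ∈ E S := by
  rw [mem_E]
  calc s * s⁻¹ * (s * s⁻¹) = (s * s⁻¹ * s) * s⁻¹ := by simp only [mul_assoc]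
    _ = s * s⁻¹ := by rw [mul_inv_mul]

lemma ir (s : S) : s⁻¹ * s ∈ E S := by
  rw [mem_E]
  calc s⁻¹ * s * (s⁻¹ * s) = (s⁻¹ * s * s⁻¹) * s := by simp only [mul_assoc]
    _ = s⁻¹ * s := by rw [inv_mul_inv]

lemma r_idem (s : S) : r s ∈ E S := rr s

lemma mul_inv_rev' (a b : S) : (a * b)⁻¹ = b⁻¹ * a⁻¹ := by
  have h1 : (a * b) * (b⁻¹ * a⁻¹) * (a * b) = a * b := by
    calc (a * b) * (b⁻¹ * a⁻¹) * (a * b) = a * ((b * b⁻¹) * (a⁻¹ * a)) * b := by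
          simp only [mul_assoc]
      _ = a * ((a⁻¹ * a) * (b * b⁻¹)) * b := by rw [idem_comm (rr b) (ir a)]
      _ = (a * a⁻¹ * a) * (b * b⁻¹ * b) := by simp only [mul_assoc]
      _ = a * b := by rw [mul_inv_mul, mul_inv_mul]
  have h2 : (b⁻¹ * a⁻¹) * (a * b) * (b⁻¹ * a⁻¹) = b⁻¹ * a⁻¹ := by
    calc (b⁻¹ * a⁻¹) * (a * b) * (b⁻¹ * a⁻¹) = b⁻¹ * ((a⁻¹ * a) * (b * b⁻¹)) * a⁻¹ := by
          simp only [mul_assoc]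
      _ = b⁻¹ * ((b * b⁻¹) * (a⁻¹ * a)) * a⁻¹ := by rw [idem_comm (ir a) (rr b)]
      _ = (b⁻¹ * b * b⁻¹) * (a⁻¹ * a * a⁻¹) := by simp only [mul_assoc]
      _ = b⁻¹ * a⁻¹ := by rw [inv_mul_inv, inv_mul_inv]
  exact (inv_unique (a * b) (b⁻¹ * a⁻¹) h1 h2).symm

lemma r_absorb (s u : S) : r s * r (s * u) = r (s * u) := by
  rw [r, r, mul_inv_rev']
  calc s * s⁻¹ * (s * u * (u⁻¹ * s⁻¹)) = (s * s⁻¹ * s) * (u * (u⁻¹ * s⁻¹)) := by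
        simp only [mul_assoc]
    _ = s * (u * (u⁻¹ * s⁻¹)) := by rw [mul_inv_mul]
    _ = s * u * (u⁻¹ * s⁻¹) := by rw [mul_assoc]

lemma r_mul_inv_self (a b : S) : r (a * b * b⁻¹) = r (a * b) := by
  rw [r, r, mul_inv_rev', inv_inv', mul_inv_rev']
  calc a * b * b⁻¹ * (b * (b⁻¹ * a⁻¹)) = a * (b * (b⁻¹ * (b * (b⁻¹ * a⁻¹)))) := by
        simp only [mul_assoc]
    _ = a * (b * (b⁻¹ * a⁻¹)) := by rw [imi]
    _ = a * b * (b⁻¹ * a⁻¹) := by rw [mul_assoc]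

lemma r_idem_mul {e : S} (he : e ∈ E S) (s : S) : r (e * s) = e * r s := by
  rw [r, r, mul_inv_rev', idem_inv he]
  calc e * s * (s⁻¹ * e) = e * ((s * s⁻¹) * e) := by simp only [mul_assoc]
    _ = e * (e * (s * s⁻¹)) := by rw [idem_comm (rr s) he]
    _ = (e * e) * (s * s⁻¹) := by simp only [mul_assoc]
    _ = e * (s * s⁻¹) := by rw [mem_E.mp he]

lemma nle_refl (s : S) : nle s s := by rw [nle, mul_inv_mul]

lemma nle_idem_mul {e : S} (he : e ∈ E S) (t : S) : nle (e * t) t := by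
  rw [nle, mul_inv_rev', idem_inv he]
  symm
  calc e * t * (t⁻¹ * e) * t = e * ((t * t⁻¹) * e) * t := by simp only [mul_assoc]
    _ = e * (e * (t * t⁻¹)) * t := by rw [idem_comm (rr t) he]
    _ = (e * e) * ((t * t⁻¹) * t) := by simp only [mul_assoc]
    _ = e * (t * t⁻¹ * t) := by rw [mem_E.mp he]
    _ = e * t := by rw [mul_inv_mul]

end InverseSemigroup


lemma foldl_mul_assoc {T : Type*} [InverseSemigroup T] (l : List (T × Bool)) (t a : T) :
    l.foldl (fun acc q => acc * letterVal q) (t * a) =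
      t * l.foldl (fun acc q => acc * letterVal q) a := by
  induction l generalizing a with
  | nil => rfl
  | cons q l ih =>
    simp only [List.foldl_cons]
    rw [mul_assoc]
    exact ih (a * letterVal q)

lemma r_foldl_absorb {T : Type*} [InverseSemigroup T] (l : List (T × Bool)) (s : T) :
    r s * r (l.foldl (fun acc q => acc * letterVal q) s) =
      r (l.foldl (fun acc q => acc * letterVal q) s) := by
  induction l generalizing s with
  | nil => exact mem_E.mp (r_idem s)
  | cons q l ih =>
    simp only [List.foldl_cons]
    calc r s * r (l.foldl (fun acc q => acc * letterVal q) (s * letterVal q))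
        = r s * (r (s * letterVal q) *
            r (l.foldl (fun acc q => acc * letterVal q) (s * letterVal q))) := by
          rw [ih (s * letterVal q)]
      _ = (r s * r (s * letterVal q)) *
            r (l.foldl (fun acc q => acc * letterVal q) (s * letterVal q)) := by
          rw [mul_assoc]
      _ = r (s * letterVal q) *
            r (l.foldl (fun acc q => acc * letterVal q) (s * letterVal q)) := by
          rw [r_absorb]
      _ = r (l.foldl (fun acc q => acc * letterVal q) (s * letterVal q)) :=
          ih (s * letterVal q)

lemma letterVal_true {T : Type*} [InverseSemigroup T] (x : T) : letterVal (x, true) = x := rfl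

lemma letterVal_false {T : Type*} [InverseSemigroup T] (x : T) :
    letterVal (x, false) = x⁻¹ := rfl

/-- For an idempotent `e`, `ξ_e(w) = θ(e · r(φ(w)))`, and `θ(e) ξ_t(w) = ξ_{et}(w)`. -/
theorem xi_idempotent {T A : Type*} [InverseSemigroup T] [InverseSemigroup A]
    (θ : T → A) (η : T → A → A)
    (hAcomm : ∀ a b : A, a * b = b * a)
    (hθE : ∀ e ∈ E T, θ e ∈ E A)
    (hθinj : ∀ e ∈ E T, ∀ f ∈ E T, θ e = θ f → e = f)
    (hθsurj : ∀ a ∈ E A, ∃ e ∈ E T, θ e = a)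
    (hθmul : ∀ e ∈ E T, ∀ f ∈ E T, θ (e * f) = θ e * θ f)
    (hηhom : ∀ t u : T, ∀ a : A, η (t * u) a = η t (η u a))
    (hηmul : ∀ t : T, ∀ a b : A, η t (a * b) = η t a * η t b)
    (hη1 : ∀ e ∈ E T, ∀ a : A, η e a = θ e * a)
    (hη2 : ∀ t : T, ∀ e ∈ E T, η t (θ e) = θ (t * e * t⁻¹))
    (c : T → T → T → A)
    (hc : ∀ x y z : T, c x y z * (c x y z)⁻¹ = θ (r (x * y * z)))
    (hcoc : ∀ x y z w : T,
      η x (c y z w) * c x y z * c x (y * z) w = c x y (z * w) * c (x * y) z w)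
    (hop : ∀ x x' y y' z z' : T, nle x x' → nle y y' → nle z z' →
      nle (c x y z) (c x' y' z'))
    (hsn : ∀ x y z : T, (x ∈ E T ∨ y ∈ E T ∨ z ∈ E T) →
      c x y z = θ (r (x * y * z)))
    (ξ : T → List (T × Bool) → A)
    (hξ1 : ∀ t x : T, ξ t [(x, true)] = θ (r (t * x)))
    (hξ2 : ∀ t x : T, ∀ u : List (T × Bool),
      ξ t ((x, false) :: u) = (c t x⁻¹ x)⁻¹ * ξ t ((x⁻¹, true) :: u))
    (hξ3 : ∀ t x y : T, ∀ v : List (T × Bool),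
      ξ t ((x, true) :: (y, true) :: v) = c t x y * ξ t ((x * y, true) :: v))
    (hξ4 : ∀ t x y : T, ∀ v : List (T × Bool),
      ξ t ((x, true) :: (y, false) :: v) =
        (c t (x * y⁻¹) y)⁻¹ * ξ t ((x * y⁻¹, true) :: v))
    : ∀ e ∈ E T, ∀ p : T × Bool, ∀ l : List (T × Bool),
      ξ e (p :: l) = θ (e * r (wordVal p l)) ∧
      (∀ t : T, θ e * ξ t (p :: l) = ξ (e * t) (p :: l)) := by
  haveI : Std.Commutative (α := A) (· * ·) := ⟨hAcomm⟩
  haveI : Std.Associative (α := A) (· * ·) := ⟨mul_assoc⟩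
  have hAinv : ∀ a b : A, (a * b)⁻¹ = a⁻¹ * b⁻¹ := fun a b => by
    rw [mul_inv_rev', hAcomm]
  have hAr : ∀ a b : A, (a * b) * (a * b)⁻¹ = (a * a⁻¹) * (b * b⁻¹) := fun a b => by
    rw [hAinv]; ac_rfl
  have absorb : ∀ (a : A) (g h : T), g ∈ E T → h ∈ E T → g * h = h →
      a * a⁻¹ = θ h → θ g * a = a := by
    intro a g h hg hh hgh ha
    calc θ g * a = θ g * ((a * a⁻¹) * a) := by rw [InverseSemigroup.mul_inv_mul]
      _ = (θ g * θ h) * a := by rw [ha, mul_assoc]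
      _ = θ (g * h) * a := by rw [hθmul g hg h hh]
      _ = θ h * a := by rw [hgh]
      _ = (a * a⁻¹) * a := by rw [ha]
      _ = a := InverseSemigroup.mul_inv_mul a
  -- the common step lemma
  have step : ∀ (w : List (T × Bool)) (d : T → A) (x' : T) (v : List (T × Bool)),
      (∀ t : T, ξ t w = d t * ξ t ((x', true) :: v)) →
      (∀ t : T, d t * (d t)⁻¹ = θ (r (t * x'))) →
      (∀ e ∈ E T, d e = θ (r (e * x'))) →
      (∀ e ∈ E T, ∀ t : T, d (e * t) = θ e * (θ (r (t * x')) * d t)) →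
      (∀ t : T, ξ t ((x', true) :: v) * (ξ t ((x', true) :: v))⁻¹ =
        θ (r (v.foldl (fun acc q => acc * letterVal q) (t * x')))) →
      (∀ e ∈ E T, ξ e ((x', true) :: v) =
        θ (e * r (v.foldl (fun acc q => acc * letterVal q) x'))) →
      (∀ e ∈ E T, ∀ t : T, θ e * ξ t ((x', true) :: v) = ξ (e * t) ((x', true) :: v)) →
      (∀ t : T, ξ t w * (ξ t w)⁻¹ =
        θ (r (v.foldl (fun acc q => acc * letterVal q) (t * x')))) ∧
      (∀ e ∈ E T, ξ e w = θ (e * r (v.foldl (fun acc q => acc * letterVal q) x'))) ∧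
      (∀ e ∈ E T, ∀ t : T, θ e * ξ t w = ξ (e * t) w) := by
    intro w d x' v Hξ Hd1 Hd2 Hd3 IH0 IH1 IH2
    refine ⟨?_, ?_, ?_⟩
    · intro t
      rw [Hξ t, hAr, Hd1 t, IH0 t, ← hθmul _ (r_idem _) _ (r_idem _),
        r_foldl_absorb v (t * x')]
    · intro e he
      rw [Hξ e, Hd2 e he, IH1 e he, r_idem_mul he x',
        ← hθmul _ (idem_mul_idem he (r_idem _)) _ (idem_mul_idem he (r_idem _))]
      congr 1
      calc (e * r x') * (e * r (v.foldl (fun acc q => acc * letterVal q) x'))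
          = e * ((r x' * e) * r (v.foldl (fun acc q => acc * letterVal q) x')) := by
            simp only [mul_assoc]
        _ = e * ((e * r x') * r (v.foldl (fun acc q => acc * letterVal q) x')) := by
            rw [idem_comm (r_idem x') he]
        _ = (e * e) * (r x' * r (v.foldl (fun acc q => acc * letterVal q) x')) := by
            simp only [mul_assoc]
        _ = e * r (v.foldl (fun acc q => acc * letterVal q) x') := by
            rw [mem_E.mp he, r_foldl_absorb v x']
    · intro e he t
      have habs : θ (r (t * x')) * ξ t ((x', true) :: v) = ξ t ((x', true) :: v) :=
        absorb _ _ _ (r_idem _) (r_idem _) (r_foldl_absorb v (t * x')) (IH0 t)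
      calc θ e * ξ t w = θ e * (d t * ξ t ((x', true) :: v)) := by rw [Hξ t]
        _ = (θ e * θ e) * (d t * (θ (r (t * x')) * ξ t ((x', true) :: v))) := by
            rw [habs, mem_E.mp (hθE e he)]
        _ = (θ e * (θ (r (t * x')) * d t)) * (θ e * ξ t ((x', true) :: v)) := by ac_rfl
        _ = d (e * t) * ξ (e * t) ((x', true) :: v) := by rw [← Hd3 e he t, IH2 e he t]
        _ = ξ (e * t) w := (Hξ (e * t)).symm
  have hd3gen : ∀ e ∈ E T, ∀ t y z : T,
      c (e * t) y z = θ e * (θ (r (t * y * z)) * c t y z) := by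
    intro e he t y z
    have h := hop (e * t) t y y z z (nle_idem_mul he t) (nle_refl y) (nle_refl z)
    rw [nle, hc] at h
    calc c (e * t) y z = θ (r (e * t * y * z)) * c t y z := h
      _ = θ (r (e * (t * y * z))) * c t y z := by
          rw [show e * t * y * z = e * (t * y * z) by simp only [mul_assoc]]
      _ = θ (e * r (t * y * z)) * c t y z := by rw [r_idem_mul he]
      _ = (θ e * θ (r (t * y * z))) * c t y z := by rw [hθmul e he _ (r_idem _)]
      _ = θ e * (θ (r (t * y * z)) * c t y z) := by rw [mul_assoc]
  have hry : ∀ a y : T, r (a * y⁻¹ * y) = r (a * y⁻¹) := by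
    intro a y
    have h := r_mul_inv_self a y⁻¹
    rwa [inv_inv'] at h
  have hr4 : ∀ t x y : T, r (t * (x * y⁻¹) * y) = r (t * (x * y⁻¹)) := by
    intro t x y
    have h := hry (t * x) y
    simp only [mul_assoc] at h ⊢
    exact h
  -- main induction on the tail, for words with a positive head letter
  have main : ∀ l : List (T × Bool), ∀ x : T,
      (∀ t : T, ξ t ((x, true) :: l) * (ξ t ((x, true) :: l))⁻¹ =
        θ (r (l.foldl (fun acc q => acc * letterVal q) (t * x)))) ∧
      (∀ e ∈ E T, ξ e ((x, true) :: l) =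
        θ (e * r (l.foldl (fun acc q => acc * letterVal q) x))) ∧
      (∀ e ∈ E T, ∀ t : T, θ e * ξ t ((x, true) :: l) = ξ (e * t) ((x, true) :: l)) := by
    intro l
    induction l with
    | nil =>
      intro x
      refine ⟨?_, ?_, ?_⟩
      · intro t
        simp only [List.foldl_nil]
        rw [hξ1]
        have h := hθE _ (r_idem (t * x))
        rw [idem_inv h]
        exact mem_E.mp h
      · intro e he
        simp only [List.foldl_nil]
        rw [hξ1, r_idem_mul he]
      · intro e he t
        rw [hξ1, hξ1, ← hθmul e he _ (r_idem _), ← r_idem_mul he, mul_assoc]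
    | cons q v ih =>
      rcases q with ⟨y, b⟩
      intro x
      cases b with
      | true =>
        have res := step ((x, true) :: (y, true) :: v) (fun t => c t x y) (x * y) v
          (fun t => hξ3 t x y v)
          (fun t => by
            show c t x y * (c t x y)⁻¹ = θ (r (t * (x * y)))
            rw [hc, mul_assoc])
          (fun e he => by
            show c e x y = θ (r (e * (x * y)))
            rw [hsn e x y (Or.inl he), mul_assoc])
          (fun e he t => by
            show c (e * t) x y = θ e * (θ (r (t * (x * y))) * c t x y)
            have h := hd3gen e he t x y
            simpa only [mul_assoc] using h)
          (ih (x * y)).1 (ih (x * y)).2.1 (ih (x * y)).2.2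
        simpa only [List.foldl_cons, letterVal_true, mul_assoc] using res
      | false =>
        have hc4 : ∀ t : T, (c t (x * y⁻¹) y)⁻¹ * ((c t (x * y⁻¹) y)⁻¹)⁻¹ =
            θ (r (t * (x * y⁻¹))) := by
          intro t
          rw [inv_inv', hAcomm, hc, hr4 t x y]
        have hd2' : ∀ e ∈ E T, (c e (x * y⁻¹) y)⁻¹ = θ (r (e * (x * y⁻¹))) := by
          intro e he
          rw [hsn e (x * y⁻¹) y (Or.inl he), idem_inv (hθE _ (r_idem _)), hr4 e x y]
        have hd3' : ∀ e ∈ E T, ∀ t : T, (c (e * t) (x * y⁻¹) y)⁻¹ =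
            θ e * (θ (r (t * (x * y⁻¹))) * (c t (x * y⁻¹) y)⁻¹) := by
          intro e he t
          rw [hd3gen e he t (x * y⁻¹) y, hr4 t x y, hAinv, hAinv,
            idem_inv (hθE e he), idem_inv (hθE _ (r_idem _))]
        have res := step ((x, true) :: (y, false) :: v)
          (fun t => (c t (x * y⁻¹) y)⁻¹) (x * y⁻¹) v
          (fun t => hξ4 t x y v) hc4 hd2' hd3'
          (ih (x * y⁻¹)).1 (ih (x * y⁻¹)).2.1 (ih (x * y⁻¹)).2.2
        simpa only [List.foldl_cons, letterVal_false, mul_assoc] using res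
  intro e he p l
  rcases p with ⟨x, b⟩
  cases b with
  | true =>
    obtain ⟨h0, h1, h2⟩ := main l x
    constructor
    · have h := h1 e he
      simpa only [wordVal, letterVal_true] using h
    · exact fun t => h2 e he t
  | false =>
    obtain ⟨h0, h1, h2⟩ := main l x⁻¹
    have hc2 : ∀ t : T, (c t x⁻¹ x)⁻¹ * ((c t x⁻¹ x)⁻¹)⁻¹ = θ (r (t * x⁻¹)) := by
      intro t
      rw [inv_inv', hAcomm, hc, hry t x]
    have hd2' : ∀ e' ∈ E T, (c e' x⁻¹ x)⁻¹ = θ (r (e' * x⁻¹)) := by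
      intro e' he'
      rw [hsn e' x⁻¹ x (Or.inl he'), idem_inv (hθE _ (r_idem _)), hry e' x]
    have hd3' : ∀ e' ∈ E T, ∀ t : T, (c (e' * t) x⁻¹ x)⁻¹ =
        θ e' * (θ (r (t * x⁻¹)) * (c t x⁻¹ x)⁻¹) := by
      intro e' he' t
      rw [hd3gen e' he' t x⁻¹ x, hry t x, hAinv, hAinv,
        idem_inv (hθE e' he'), idem_inv (hθE _ (r_idem _))]
    have res := step ((x, false) :: l) (fun t => (c t x⁻¹ x)⁻¹) x⁻¹ l
      (fun t => hξ2 t x l) hc2 hd2' hd3' h0 h1 h2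
    constructor
    · have h := res.2.1 e he
      simpa only [wordVal, letterVal_false] using h
    · exact fun t => res.2.2 e he t
end

section
/- Let T be an inverse semigroup, A a T-module, and consider the crossed module extension A → N → S → T constructed from a strongly normalized c ∈ Z³_≤(T¹,A¹), where S is the E-unitary cover of T through FG(T). If T is an F-inverse monoid, then both π : S → T and β : N → S admit order-preserving transversals respecting idempotents; explicitly, σ(e, w) = (θ(e), e, w) is such a transversal of β, and ρ(t) = (t, [max t]) for t ∉ E(T), ρ(e) = (e, ε) for e ∈ E(T), is such a transversal of π. -/
open InverseSemigroup

/-- Evaluate a word over the alphabet `T ⊔ T⁻¹` (encoded as `List (T × Bool)`,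
with `(x, true) = [x]` and `(x, false) = [x]⁻¹`) in `T¹ = WithOne T`;
the empty word evaluates to `1`. -/
def evalWord {T : Type*} [InverseSemigroup T] (l : List (T × Bool)) : WithOne T :=
  l.foldr (fun p acc => (↑(if p.2 then p.1 else p.1⁻¹) : WithOne T) * acc) 1

/-- The map `ν : FG(T) → T¹` evaluating the reduced word of an element of the free
group on `T`; `ν(ε) = 1`. -/
def nu {T : Type*} [InverseSemigroup T] [DecidableEq T] (w : FreeGroup T) : WithOne T :=
  evalWord (FreeGroup.toWord w)

/-- Membership in the `E`-unitary cover `S = {(t,w) ∈ T × FG(T) | t ≤ ν(w)}`. -/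
def Pcov {T : Type*} [InverseSemigroup T] [DecidableEq T] (p : T × FreeGroup T) : Prop :=
  nle (p.1 : WithOne T) (nu p.2)

/-- Membership in `N = {(a,e,w) | a ∈ A_{θ(e)}, e ∈ E(T), e ≤ ν(w)}`. -/
def QN {T A : Type*} [InverseSemigroup T] [InverseSemigroup A] [DecidableEq T]
    (θ : T → A) (n : A × T × FreeGroup T) : Prop :=
  n.2.1 ∈ E T ∧ n.1 * n.1⁻¹ = θ n.2.1 ∧ nle (n.2.1 : WithOne T) (nu n.2.2)

/-- The transversal `σ(e, w) = (θ(e), e, w)` of `β`. -/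
def sigmaF {T A : Type*} [InverseSemigroup T] (θ : T → A) (p : T × FreeGroup T) :
    A × T × FreeGroup T :=
  (θ p.1, p.1, p.2)

/-- The transversal `ρ(t) = (t, [max t])` for `t ∉ E(T)`, `ρ(e) = (e, ε)` for
idempotent `e`, of `π`, where `max` is the maximum element of the `σ`-class. -/
def rhoF {T : Type*} [InverseSemigroup T] [DecidableEq T] (mx : T → T) (t : T) :
    T × FreeGroup T :=
  if t * t = t then (t, (1 : FreeGroup T)) else (t, FreeGroup.of (mx t))

private theorem inv_of_idem {S : Type*} [InverseSemigroup S] {e : S} (he : e * e = e) :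
    e⁻¹ = e :=
  (InverseSemigroup.inv_unique e e (by rw [he, he]) (by rw [he, he])).symm

private theorem nle_refl' {S : Type*} [InverseSemigroup S] (s : S) : nle s s :=
  (InverseSemigroup.mul_inv_mul s).symm

private theorem r_idem' {S : Type*} [InverseSemigroup S] (s : S) :
    (s * s⁻¹) * (s * s⁻¹) = s * s⁻¹ := by
  have h := InverseSemigroup.mul_inv_mul s
  calc (s * s⁻¹) * (s * s⁻¹) = (s * s⁻¹ * s) * s⁻¹ := (mul_assoc _ s s⁻¹).symm
    _ = s * s⁻¹ := by rw [h]

/-- If `T` is an `F`-inverse monoid, then in the crossed module extension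
`A → N → S → T` built on the `E`-unitary cover of `T` through `FG(T)`, both `β` and
`π` admit order-preserving transversals respecting idempotents: explicitly `σ` and
`ρ` as above. -/
theorem cover_admissible_of_F_inverse {T A : Type*}
    [InverseSemigroup T] [InverseSemigroup A] [DecidableEq T]
    -- T is a monoid
    (one : T) (hone : ∀ t : T, one * t = t ∧ t * one = t)
    -- T is F-inverse: mx t is the maximum of the σ-class of t
    (mx : T → T)
    (hmx1 : ∀ t : T, nle t (mx t))
    (hmx2 : ∀ s t : T, (∃ u : T, nle u s ∧ nle u t) → mx s = mx t)
    (θ : T → A) (η : T → A → A)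
    (hAcomm : ∀ a b : A, a * b = b * a)
    (hθE : ∀ e ∈ E T, θ e ∈ E A)
    (hθinj : ∀ e ∈ E T, ∀ f ∈ E T, θ e = θ f → e = f)
    (hθsurj : ∀ a ∈ E A, ∃ e ∈ E T, θ e = a)
    (hθmul : ∀ e ∈ E T, ∀ f ∈ E T, θ (e * f) = θ e * θ f)
    (hηhom : ∀ t u : T, ∀ a : A, η (t * u) a = η t (η u a))
    (hηmul : ∀ t : T, ∀ a b : A, η t (a * b) = η t a * η t b)
    (hη1 : ∀ e ∈ E T, ∀ a : A, η e a = θ e * a)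
    (hη2 : ∀ t : T, ∀ e ∈ E T, η t (θ e) = θ (t * e * t⁻¹))
    :
    -- σ is a transversal of β defined on β(N) = K
    (∀ p : T × FreeGroup T, p.1 ∈ E T → Pcov p →
      QN θ (sigmaF θ p) ∧ ((sigmaF θ p).2.1, (sigmaF θ p).2.2) = p) ∧
    -- σ respects idempotents
    (∀ p : T × FreeGroup T, Pcov p → p * p = p →
      sigmaF θ p * sigmaF θ p = sigmaF θ p) ∧
    -- σ is order-preserving
    (∀ p q : T × FreeGroup T, p.1 ∈ E T → q.1 ∈ E T → Pcov p → Pcov q →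
      nle p q → nle (sigmaF θ p) (sigmaF θ q)) ∧
    -- ρ is a transversal of π
    (∀ t : T, Pcov (rhoF mx t) ∧ (rhoF mx t).1 = t) ∧
    -- ρ respects idempotents
    (∀ e ∈ E T, rhoF mx e * rhoF mx e = rhoF mx e) ∧
    -- ρ is order-preserving
    (∀ t u : T, nle t u → nle (rhoF mx t) (rhoF mx u)) := by
  -- basic facts about `one`
  have hone_idem : one * one = one := (hone one).1
  have hmxone : mx one = one := by
    have h := hmx1 one
    unfold nle at h
    rw [inv_of_idem hone_idem, hone_idem, (hone (mx one)).1] at h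
    exact h.symm
  have hEone : ∀ t : T, t * t = t → nle t one := by
    intro t ht
    unfold nle
    rw [inv_of_idem ht, ht, (hone t).2]
  have hmxE : ∀ t : T, t * t = t → mx t = one := by
    intro t ht
    rw [hmx2 t one ⟨t, nle_refl' t, hEone t ht⟩, hmxone]
  refine ⟨?_, ?_, ?_, ?_, ?_, ?_⟩
  · -- σ is a transversal of β
    intro p hpE hp
    refine ⟨⟨hpE, ?_, hp⟩, rfl⟩
    show θ p.1 * (θ p.1)⁻¹ = θ p.1
    rw [inv_of_idem (hθE p.1 hpE)]
    exact hθE p.1 hpE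
  · -- σ respects idempotents
    intro p _ hp
    have h1 : p.1 * p.1 = p.1 := congrArg Prod.fst hp
    have h2 : p.2 * p.2 = p.2 := congrArg Prod.snd hp
    show (θ p.1 * θ p.1, p.1 * p.1, p.2 * p.2) = (θ p.1, p.1, p.2)
    rw [(hθE p.1 h1 : θ p.1 * θ p.1 = θ p.1), h1, h2]
  · -- σ is order-preserving
    intro p q hpE hqE _ _ hle
    have h1 : p.1 = p.1 * p.1⁻¹ * q.1 := congrArg Prod.fst hle
    have h2 : p.2 = p.2 * p.2⁻¹ * q.2 := congrArg Prod.snd hle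
    have hpq : p.1 = p.1 * q.1 := by
      rw [inv_of_idem hpE, (hpE : p.1 * p.1 = p.1)] at h1
      exact h1
    have hA : θ p.1 = θ p.1 * (θ p.1)⁻¹ * θ q.1 := by
      rw [inv_of_idem (hθE p.1 hpE), (hθE p.1 hpE : θ p.1 * θ p.1 = θ p.1),
        ← hθmul p.1 hpE q.1 hqE, ← hpq]
    show (θ p.1, p.1, p.2) = (θ p.1 * (θ p.1)⁻¹ * θ q.1, p.1 * p.1⁻¹ * q.1, p.2 * p.2⁻¹ * q.2)
    rw [← hA, ← h1, ← h2]
  · -- ρ is a transversal of π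
    intro t
    unfold rhoF
    by_cases h : t * t = t
    · rw [if_pos h]
      refine ⟨?_, rfl⟩
      show nle ((t : WithOne T)) (nu 1)
      have hnu : nu (1 : FreeGroup T) = 1 := by
        unfold nu
        rw [FreeGroup.toWord_one]
        rfl
      unfold nle
      rw [hnu, mul_one, ← WithOne.coe_inv, ← WithOne.coe_mul, inv_of_idem h, h]
    · rw [if_neg h]
      refine ⟨?_, rfl⟩
      show nle ((t : WithOne T)) (nu (FreeGroup.of (mx t)))
      have hnu : nu (FreeGroup.of (mx t)) = (↑(mx t) : WithOne T) := by
        unfold nu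
        rw [FreeGroup.toWord_of]
        show (↑(mx t) : WithOne T) * 1 = ↑(mx t)
        rw [mul_one]
      unfold nle
      rw [hnu, ← WithOne.coe_inv, ← WithOne.coe_mul, ← WithOne.coe_mul]
      exact_mod_cast congrArg (fun x : T => (↑x : WithOne T)) (hmx1 t)
  · -- ρ respects idempotents
    intro e he
    have he' : e * e = e := he
    unfold rhoF
    rw [if_pos he']
    show ((e * e : T), (1 : FreeGroup T) * 1) = (e, 1)
    rw [he', mul_one]
  · -- ρ is order-preserving
    intro t u hle
    have h1 : t = t * t⁻¹ * u := hle
    by_cases ht : t * t = t <;> by_cases hu : u * u = u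
    · unfold rhoF
      rw [if_pos ht, if_pos hu]
      show (t, (1 : FreeGroup T)) = (t * t⁻¹ * u, 1 * 1⁻¹ * 1)
      rw [← h1]
      simp
    · -- t idempotent, u not: contradiction
      exfalso
      have hmt : mx t = mx u := hmx2 t u ⟨t, nle_refl' t, hle⟩
      have hmu : mx u = one := by rw [← hmt, hmxE t ht]
      have h2 := hmx1 u
      unfold nle at h2
      rw [hmu, (hone (u * u⁻¹)).2] at h2
      apply hu
      rw [h2]
      exact r_idem' u
    · -- u idempotent, t not: contradiction
      exfalso
      have hmt : mx t = mx u := hmx2 t u ⟨t, nle_refl' t, hle⟩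
      have hmu : mx t = one := by rw [hmt, hmxE u hu]
      have h2 := hmx1 t
      unfold nle at h2
      rw [hmu, (hone (t * t⁻¹)).2] at h2
      apply ht
      rw [h2]
      exact r_idem' t
    · have hmt : mx t = mx u := hmx2 t u ⟨t, nle_refl' t, hle⟩
      unfold rhoF
      rw [if_neg ht, if_neg hu, hmt]
      show (t, FreeGroup.of (mx u)) =
        (t * t⁻¹ * u, FreeGroup.of (mx u) * (FreeGroup.of (mx u))⁻¹ * FreeGroup.of (mx u))
      rw [← h1]
      simp
end
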